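/- Let E be a finite-dimensional real inner product space, L : E → ℝ convex and continuously differentiable, λ > 0 and W₀ ∈ E. Define C(W) = L(W) + (λ/2)‖W−W₀‖². If W : [0,∞) → E is differentiable with W'(t) = −∇C(W(t)) and W(0) = W₀, then the regulariser R(t) = ½‖W(t)−W₀‖² satisfies, for every t ≥ 0, R(t) ≤ (1/λ) (C(W₀) − C(W(t))) (1 − e^{−λt}). -/

import Mathlib

open Set Filter

private lemma deriv_le_sub_of_convexOn (g : ℝ → ℝ) (hg : ConvexOn ℝ Set.univ g)
    {g' : ℝ} (h : HasDerivAt g g' 0) : g' ≤ g 1 - g 0 := by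
  have hs : Tendsto (slope g 0) (nhdsWithin 0 (Set.Ioi 0)) (nhds g') :=
    (hasDerivAt_iff_tendsto_slope.mp h).mono_left
      (nhdsWithin_mono _ fun s hs => ne_of_gt hs)
  refine le_of_tendsto hs ?_
  filter_upwards [Ioo_mem_nhdsGT_of_mem (Set.mem_Ico.2 ⟨le_refl (0:ℝ), one_pos⟩)] with s hs0
  have hmono := hg.slope_mono (Set.mem_univ 0)
    (show s ∈ Set.univ \ {0} from ⟨Set.mem_univ s, ne_of_gt hs0.1⟩)
    (show (1:ℝ) ∈ Set.univ \ {0} from ⟨Set.mem_univ 1, one_ne_zero⟩) hs0.2.le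
  calc slope g 0 s ≤ slope g 0 1 := hmono
    _ = g 1 - g 0 := by simp [slope_def_field]

private lemma fderiv_sub_le_of_convex {E : Type*} [NormedAddCommGroup E]
    [InnerProductSpace ℝ E] (L : E → ℝ) (hL : Differentiable ℝ L)
    (hconv : ConvexOn ℝ Set.univ L) (x y : E) :
    fderiv ℝ L x (y - x) ≤ L y - L x := by
  have hline : HasDerivAt (fun s : ℝ => x + s • (y - x)) (y - x) 0 := by
    simpa using ((hasDerivAt_id (0:ℝ)).smul_const (y - x)).const_add x
  have hg : HasDerivAt (fun s : ℝ => L (x + s • (y - x))) (fderiv ℝ L x (y - x)) 0 := by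
    have h1 := (hL (x + (0:ℝ) • (y - x))).hasFDerivAt.comp_hasDerivAt 0 hline
    rw [zero_smul, add_zero] at h1
    exact h1
  have hgconv : ConvexOn ℝ Set.univ (fun s : ℝ => L (x + s • (y - x))) := by
    have h2 := hconv.comp_affineMap (AffineMap.lineMap x y)
    have h3 : (⇑(AffineMap.lineMap x y) ⁻¹' Set.univ : Set ℝ) = Set.univ := by simp
    rw [h3] at h2
    have hfun : (fun s : ℝ => L (x + s • (y - x))) = L ∘ AffineMap.lineMap x y := by
      funext s
      simp [AffineMap.lineMap_apply, add_comm]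
    rw [hfun]
    exact h2
  have := deriv_le_sub_of_convexOn _ hgconv hg
  simpa using this

theorem stmt6 {E : Type*} [NormedAddCommGroup E] [InnerProductSpace ℝ E]
    [FiniteDimensional ℝ E]
    (L : E → ℝ) (hL : ContDiff ℝ 1 L) (hconv : ConvexOn ℝ Set.univ L)
    (lam : ℝ) (hlam : 0 < lam) (W₀ : E)
    (C : E → ℝ) (hC : ∀ w, C w = L w + lam / 2 * ‖w - W₀‖ ^ 2)
    (W : ℝ → E) (R : ℝ → ℝ) (hR : ∀ t, R t = 1 / 2 * ‖W t - W₀‖ ^ 2)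
    (hW0 : W 0 = W₀)
    (hW : ∀ t : ℝ, HasDerivAt W (-gradient C (W t)) t)
    (t : ℝ) (ht : 0 ≤ t) :
    R t ≤ (1 / lam) * (C W₀ - C (W t)) * (1 - Real.exp (-lam * t)) := by
  have hLd : Differentiable ℝ L := hL.differentiable one_ne_zero
  -- the Fréchet derivative of C
  have hCd : ∀ w : E, HasFDerivAt C ((fderiv ℝ L w) + lam • (innerSL ℝ (w - W₀))) w := by
    intro w
    have h1 : HasFDerivAt (fun x : E => x - W₀) (ContinuousLinearMap.id ℝ E) w :=
      (hasFDerivAt_id w).sub_const W₀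
    have h3 : HasFDerivAt (fun x : E => lam / 2 * ‖x - W₀‖ ^ 2)
        ((lam / 2) • (2 • (innerSL ℝ (w - W₀)).comp (ContinuousLinearMap.id ℝ E))) w :=
      h1.norm_sq.const_mul (lam / 2)
    have h4 := (hLd w).hasFDerivAt.add h3
    have heq : C = fun w => L w + lam / 2 * ‖w - W₀‖ ^ 2 := funext hC
    rw [heq]
    refine h4.congr_fderiv ?_
    ext v
    simp only [ContinuousLinearMap.add_apply, ContinuousLinearMap.smul_apply,
      ContinuousLinearMap.comp_apply, ContinuousLinearMap.id_apply, innerSL_apply_apply,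
      smul_eq_mul]
    ring
  have hgrad : ∀ (w v : E), (inner ℝ (gradient C w) v : ℝ) = fderiv ℝ C w v := fun w v => by
    rw [gradient, InnerProductSpace.toDual_symm_apply]
  have hginner : ∀ w v : E, (inner ℝ (gradient C w) v : ℝ)
      = fderiv ℝ L w v + lam * (inner ℝ (w - W₀) v : ℝ) := by
    intro w v
    rw [hgrad, (hCd w).fderiv]
    simp [inner_sub_left]
  -- C ∘ W is non-increasing
  have hCW_deriv : ∀ s : ℝ, HasDerivAt (fun u => C (W u)) (-‖gradient C (W s)‖ ^ 2) s := by
    intro s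
    have h1 := (hCd (W s)).comp_hasDerivAt s (hW s)
    have hval : ((fderiv ℝ L (W s)) + lam • (innerSL ℝ (W s - W₀))) (-gradient C (W s))
        = -‖gradient C (W s)‖ ^ 2 := by
      rw [← (hCd (W s)).fderiv, ← hgrad, inner_neg_right, real_inner_self_eq_norm_sq]
    rw [hval] at h1
    exact h1
  have hCmono : ∀ ⦃a b : ℝ⦄, a ≤ b → C (W b) ≤ C (W a) := by
    have hdiff : Differentiable ℝ (fun u => C (W u)) := fun s => (hCW_deriv s).differentiableAt
    exact fun a b hab => antitone_of_deriv_nonpos hdiff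
      (fun s => by rw [(hCW_deriv s).deriv]; exact neg_nonpos.2 (sq_nonneg _)) hab
  -- derivative of R
  have hRd : ∀ s : ℝ, HasDerivAt R (-(inner ℝ (gradient C (W s)) (W s - W₀) : ℝ)) s := by
    intro s
    have h1 : HasDerivAt (fun u => W u - W₀) (-gradient C (W s)) s := (hW s).sub_const W₀
    have h3 := h1.norm_sq.const_mul (1 / 2 : ℝ)
    have heq : R = fun u => 1 / 2 * ‖W u - W₀‖ ^ 2 := funext hR
    rw [heq]
    refine h3.congr_deriv ?_
    rw [inner_neg_right, real_inner_comm]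
    ring
  have hR0 : R 0 = 0 := by rw [hR, hW0]; simp
  set A := C W₀ - C (W t) with hA
  -- differential inequality
  have hineq : ∀ s ∈ Set.Icc (0:ℝ) t,
      -(inner ℝ (gradient C (W s)) (W s - W₀) : ℝ) ≤ A - lam * R s := by
    intro s hs
    have hCs : C (W t) ≤ C (W s) := hCmono hs.2
    have hconvi : -(fderiv ℝ L (W s) (W s - W₀)) ≤ L W₀ - L (W s) := by
      have h1 := fderiv_sub_le_of_convex L hLd hconv (W s) W₀
      have hmap : fderiv ℝ L (W s) (W₀ - W s) = -(fderiv ℝ L (W s) (W s - W₀)) := by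
        rw [← map_neg]; congr 1; abel
      rw [hmap] at h1
      exact h1
    have hgi : (inner ℝ (gradient C (W s)) (W s - W₀) : ℝ)
        = fderiv ℝ L (W s) (W s - W₀) + lam * ‖W s - W₀‖ ^ 2 := by
      rw [hginner, real_inner_self_eq_norm_sq]
    have hCW0 : C W₀ = L W₀ := by rw [hC]; simp
    have hCWs : C (W s) = L (W s) + lam / 2 * ‖W s - W₀‖ ^ 2 := hC _
    have hlamR : lam * R s = lam / 2 * ‖W s - W₀‖ ^ 2 := by rw [hR]; ring
    linarith
  -- Gronwall argument
  set g : ℝ → ℝ := fun s => Real.exp (lam * s) * R s - (A / lam) * (Real.exp (lam * s) - 1)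
    with hgdef
  have he : ∀ s : ℝ, HasDerivAt (fun u => Real.exp (lam * u)) (Real.exp (lam * s) * lam) s := by
    intro s
    exact (Real.hasDerivAt_exp (lam * s)).comp s (by simpa using (hasDerivAt_id s).const_mul lam)
  have hgd : ∀ s : ℝ, HasDerivAt g
      (Real.exp (lam * s) * lam * R s
        + Real.exp (lam * s) * (-(inner ℝ (gradient C (W s)) (W s - W₀) : ℝ))
        - (A / lam) * (Real.exp (lam * s) * lam)) s := by
    intro s
    exact ((he s).mul (hRd s)).sub (((he s).sub_const 1).const_mul (A / lam))
  have hganti : AntitoneOn g (Set.Icc 0 t) := by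
    refine antitoneOn_of_deriv_nonpos (convex_Icc 0 t)
      (fun s _ => ((hgd s).differentiableAt).continuousAt.continuousWithinAt)
      (fun s _ => ((hgd s).differentiableAt).differentiableWithinAt) ?_
    intro s hs
    rw [interior_Icc] at hs
    rw [(hgd s).deriv]
    have h1 := hineq s ⟨hs.1.le, hs.2.le⟩
    have h2 : (0:ℝ) < Real.exp (lam * s) := Real.exp_pos _
    have h3 : A / lam * (Real.exp (lam * s) * lam) = A * Real.exp (lam * s) := by
      field_simp
    have h4 := mul_le_mul_of_nonneg_left h1 h2.le
    nlinarith [h4]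
  have hgt : g t ≤ 0 := by
    have := hganti (Set.left_mem_Icc.2 ht) (Set.right_mem_Icc.2 ht) ht
    simpa [hgdef, hR0] using this
  -- unwind
  have h5 : Real.exp (lam * t) * R t ≤ (A / lam) * (Real.exp (lam * t) - 1) := by
    have : Real.exp (lam * t) * R t - (A / lam) * (Real.exp (lam * t) - 1) ≤ 0 := hgt
    linarith
  have h1 : Real.exp (-(lam * t)) * Real.exp (lam * t) = 1 := by
    rw [← Real.exp_add]; simp
  have hf : (0:ℝ) < Real.exp (-(lam * t)) := Real.exp_pos _
  have key : R t ≤ (A / lam) * (1 - Real.exp (-(lam * t))) := by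
    calc R t = Real.exp (-(lam * t)) * (Real.exp (lam * t) * R t) := by
          rw [← mul_assoc, h1, one_mul]
      _ ≤ Real.exp (-(lam * t)) * ((A / lam) * (Real.exp (lam * t) - 1)) :=
          mul_le_mul_of_nonneg_left h5 hf.le
      _ = (A / lam) * (Real.exp (-(lam * t)) * Real.exp (lam * t) - Real.exp (-(lam * t))) := by
          ring
      _ = (A / lam) * (1 - Real.exp (-(lam * t))) := by rw [h1]
  have hfin : (1 / lam) * (C W₀ - C (W t)) * (1 - Real.exp (-lam * t))
      = (A / lam) * (1 - Real.exp (-(lam * t))) := by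
    rw [neg_mul, hA]; ring
  rw [hfin]
  exact key
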